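/- Let a < b and c < d be real numbers, Δ = [a,b] × [c,d], let f : Δ → ℝ be (L₁, L₂)-Lipschitz on Δ with L₁, L₂ > 0, and define H : [0,1] × [0,1] → ℝ by H(t,s) = (1/((b-a)(d-c))) ∫_a^b ∫_c^d f(t·x + (1-t)·(a+b)/2, s·y + (1-s)·(c+d)/2) dy dx. Then for all t, s ∈ [0,1], |H(t,s) − f((a+b)/2, (c+d)/2)| ≤ (L₁·t/4)·(b-a) + (L₂·s/4)·(d-c). -/

import Mathlib

open MeasureTheory Set intervalIntegral

/-- Theorem 7(ii), inequality (3.1): for the mapping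
`H(t,s) = (1/((b-a)(d-c))) ∫_a^b ∫_c^d f(tx+(1-t)(a+b)/2, sy+(1-s)(c+d)/2) dy dx`
associated with an `(L₁, L₂)`-Lipschitz function `f` on `[a,b] × [c,d]`,
`|H(t,s) − f((a+b)/2,(c+d)/2)| ≤ (L₁ t/4)(b-a) + (L₂ s/4)(d-c)` for `t,s ∈ [0,1]`. -/
lemma integral_abs_sub_mid (c d : ℝ) (h : c ≤ d) :
    (∫ y in c..d, |y - (c + d) / 2|) = (d - c)^2 / 4 := by
  set m := (c + d) / 2 with hm
  have hcm : c ≤ m := by rw [hm]; linarith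
  have hmd : m ≤ d := by rw [hm]; linarith
  have hint : ∀ u v : ℝ, IntervalIntegrable (fun y => |y - m|) volume u v := fun u v =>
    (continuous_abs.comp (continuous_id.sub continuous_const)).intervalIntegrable u v
  have h1 : (∫ y in c..m, |y - m|) = ∫ y in c..m, (m - y) := by
    apply intervalIntegral.integral_congr
    intro y hy
    rw [uIcc_of_le hcm, mem_Icc] at hy
    show |y - m| = m - y
    rw [abs_of_nonpos (by linarith [hy.2])]; ring
  have h2 : (∫ y in m..d, |y - m|) = ∫ y in m..d, (y - m) := by
    apply intervalIntegral.integral_congr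
    intro y hy
    rw [uIcc_of_le hmd, mem_Icc] at hy
    show |y - m| = y - m
    rw [abs_of_nonneg (by linarith [hy.1])]
  have hadd : (∫ y in c..m, |y - m|) + (∫ y in m..d, |y - m|) = ∫ y in c..d, |y - m| :=
    intervalIntegral.integral_add_adjacent_intervals (hint c m) (hint m d)
  have e1 : (∫ y in c..m, (m - y)) = m * (m - c) - (m^2 - c^2)/2 := by
    rw [intervalIntegral.integral_sub (intervalIntegrable_const) intervalIntegrable_id,
      integral_id, intervalIntegral.integral_const]
    simp [smul_eq_mul]; ring
  have e2 : (∫ y in m..d, (y - m)) = (d^2 - m^2)/2 - m * (d - m) := by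
    rw [intervalIntegral.integral_sub intervalIntegrable_id (intervalIntegrable_const),
      integral_id, intervalIntegral.integral_const]
    simp [smul_eq_mul]; ring
  rw [← hadd, h1, h2, e1, e2, hm]; ring


theorem mapping_H_midpoint_bound
    (a b c d L₁ L₂ : ℝ) (hab : a < b) (hcd : c < d) (hL₁ : 0 < L₁) (hL₂ : 0 < L₂)
    (f : ℝ → ℝ → ℝ)
    (hf : ∀ t₁ ∈ Icc a b, ∀ t₂ ∈ Icc a b, ∀ s₁ ∈ Icc c d, ∀ s₂ ∈ Icc c d,
      |f t₁ s₁ - f t₂ s₂| ≤ L₁ * |t₁ - t₂| + L₂ * |s₁ - s₂|)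
    (H : ℝ → ℝ → ℝ)
    (hH : ∀ t s, H t s = (1 / ((b - a) * (d - c))) *
      ∫ x in a..b, ∫ y in c..d,
        f (t * x + (1 - t) * ((a + b) / 2)) (s * y + (1 - s) * ((c + d) / 2))) :
    ∀ t ∈ Icc (0:ℝ) 1, ∀ s ∈ Icc (0:ℝ) 1,
      |H t s - f ((a + b) / 2) ((c + d) / 2)| ≤
        (L₁ * t / 4) * (b - a) + (L₂ * s / 4) * (d - c) := by
  intro t ht s hs
  rw [mem_Icc] at ht hs
  obtain ⟨ht0, ht1⟩ := ht
  obtain ⟨hs0, hs1⟩ := hs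
  set m₁ : ℝ := (a + b) / 2 with hm₁
  set m₂ : ℝ := (c + d) / 2 with hm₂
  set C : ℝ := f m₁ m₂ with hC
  set g : ℝ → ℝ → ℝ := fun x y => f (t * x + (1 - t) * m₁) (s * y + (1 - s) * m₂) with hg
  -- memberships
  have hφmem : ∀ x ∈ Icc a b, t * x + (1 - t) * m₁ ∈ Icc a b := by
    intro x hx
    rw [mem_Icc] at hx ⊢
    constructor <;> nlinarith [hx.1, hx.2]
  have hψmem : ∀ y ∈ Icc c d, s * y + (1 - s) * m₂ ∈ Icc c d := by
    intro y hy
    rw [mem_Icc] at hy ⊢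
    constructor <;> nlinarith [hy.1, hy.2]
  have hm₁mem : m₁ ∈ Icc a b := by rw [mem_Icc, hm₁]; constructor <;> linarith
  have hm₂mem : m₂ ∈ Icc c d := by rw [mem_Icc, hm₂]; constructor <;> linarith
  -- Lipschitz property of g on the rectangle
  have hgLip : ∀ x₁ ∈ Icc a b, ∀ x₂ ∈ Icc a b, ∀ y₁ ∈ Icc c d, ∀ y₂ ∈ Icc c d,
      |g x₁ y₁ - g x₂ y₂| ≤ L₁ * (t * |x₁ - x₂|) + L₂ * (s * |y₁ - y₂|) := by
    intro x₁ hx₁ x₂ hx₂ y₁ hy₁ y₂ hy₂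
    have h1 : |(t * x₁ + (1 - t) * m₁) - (t * x₂ + (1 - t) * m₁)| = t * |x₁ - x₂| := by
      rw [show (t * x₁ + (1 - t) * m₁) - (t * x₂ + (1 - t) * m₁) = t * (x₁ - x₂) by ring,
        abs_mul, abs_of_nonneg ht0]
    have h2 : |(s * y₁ + (1 - s) * m₂) - (s * y₂ + (1 - s) * m₂)| = s * |y₁ - y₂| := by
      rw [show (s * y₁ + (1 - s) * m₂) - (s * y₂ + (1 - s) * m₂) = s * (y₁ - y₂) by ring,
        abs_mul, abs_of_nonneg hs0]
    have := hf _ (hφmem x₁ hx₁) _ (hφmem x₂ hx₂) _ (hψmem y₁ hy₁) _ (hψmem y₂ hy₂)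
    rw [h1, h2] at this
    exact this
  -- pointwise bound against the midpoint value
  have hgC : ∀ x ∈ Icc a b, ∀ y ∈ Icc c d,
      |g x y - C| ≤ L₁ * (t * |x - m₁|) + L₂ * (s * |y - m₂|) := by
    intro x hx y hy
    have h1 : |(t * x + (1 - t) * m₁) - m₁| = t * |x - m₁| := by
      rw [show (t * x + (1 - t) * m₁) - m₁ = t * (x - m₁) by ring, abs_mul, abs_of_nonneg ht0]
    have h2 : |(s * y + (1 - s) * m₂) - m₂| = s * |y - m₂| := by
      rw [show (s * y + (1 - s) * m₂) - m₂ = s * (y - m₂) by ring, abs_mul, abs_of_nonneg hs0]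
    have := hf _ (hφmem x hx) _ hm₁mem _ (hψmem y hy) _ hm₂mem
    rw [h1, h2] at this
    exact this
  -- inner integrability
  have hIy : ∀ x ∈ Icc a b, IntervalIntegrable (fun y => g x y) volume c d := by
    intro x hx
    have hlip : LipschitzOnWith (Real.toNNReal (L₂ * s)) (fun y => g x y) (Icc c d) := by
      apply LipschitzOnWith.of_dist_le_mul
      intro y₁ hy₁ y₂ hy₂
      rw [Real.dist_eq, Real.dist_eq]
      have := hgLip x hx x hx y₁ hy₁ y₂ hy₂
      simp only [sub_self, abs_zero, mul_zero, zero_add] at this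
      calc |g x y₁ - g x y₂| ≤ L₂ * (s * |y₁ - y₂|) := this
        _ = (Real.toNNReal (L₂ * s) : ℝ) * |y₁ - y₂| := by
            rw [Real.coe_toNNReal _ (mul_nonneg hL₂.le hs0)]; ring
    exact (hlip.continuousOn.mono (by rw [uIcc_of_le hcd.le])).intervalIntegrable
  -- inner integral function
  set Ψ : ℝ → ℝ := fun x => ∫ y in c..d, g x y with hΨ
  -- Lipschitz of Ψ on [a,b]
  have hΨlip : ∀ x₁ ∈ Icc a b, ∀ x₂ ∈ Icc a b,
      |Ψ x₁ - Ψ x₂| ≤ ((d - c) * (L₁ * t)) * |x₁ - x₂| := by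
    intro x₁ hx₁ x₂ hx₂
    have hsub : Ψ x₁ - Ψ x₂ = ∫ y in c..d, (g x₁ y - g x₂ y) :=
      (intervalIntegral.integral_sub (hIy x₁ hx₁) (hIy x₂ hx₂)).symm
    rw [hsub]
    calc |∫ y in c..d, (g x₁ y - g x₂ y)| ≤ ∫ y in c..d, |g x₁ y - g x₂ y| :=
          intervalIntegral.abs_integral_le_integral_abs hcd.le
      _ ≤ ∫ y in c..d, (L₁ * (t * |x₁ - x₂|)) := by
          apply intervalIntegral.integral_mono_on hcd.le
            ((hIy x₁ hx₁).sub (hIy x₂ hx₂)).abs intervalIntegrable_const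
          intro y hy
          have := hgLip x₁ hx₁ x₂ hx₂ y hy y hy
          simpa using this
      _ = ((d - c) * (L₁ * t)) * |x₁ - x₂| := by
          rw [intervalIntegral.integral_const, smul_eq_mul]; ring
  have hΨint : IntervalIntegrable Ψ volume a b := by
    have hlip : LipschitzOnWith (Real.toNNReal ((d - c) * (L₁ * t))) Ψ (Icc a b) := by
      apply LipschitzOnWith.of_dist_le_mul
      intro x₁ hx₁ x₂ hx₂
      rw [Real.dist_eq, Real.dist_eq]
      calc |Ψ x₁ - Ψ x₂| ≤ ((d - c) * (L₁ * t)) * |x₁ - x₂| := hΨlip x₁ hx₁ x₂ hx₂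
        _ = (Real.toNNReal ((d - c) * (L₁ * t)) : ℝ) * |x₁ - x₂| := by
            rw [Real.coe_toNNReal _ (mul_nonneg (by linarith) (mul_nonneg hL₁.le ht0))]
    exact (hlip.continuousOn.mono (by rw [uIcc_of_le hab.le])).intervalIntegrable
  -- pointwise bound on Ψ x - (d-c)*C
  have hΨbd : ∀ x ∈ Icc a b,
      |Ψ x - (d - c) * C| ≤ (d - c) * (L₁ * (t * |x - m₁|)) + L₂ * s * ((d - c)^2 / 4) := by
    intro x hx
    have hsub : Ψ x - (d - c) * C = ∫ y in c..d, (g x y - C) := by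
      rw [intervalIntegral.integral_sub (hIy x hx) intervalIntegrable_const,
        intervalIntegral.integral_const, smul_eq_mul]
    rw [hsub]
    have habsC : IntervalIntegrable (fun y => |y - m₂|) volume c d :=
      (continuous_abs.comp (continuous_id.sub continuous_const)).intervalIntegrable c d
    calc |∫ y in c..d, (g x y - C)| ≤ ∫ y in c..d, |g x y - C| :=
          intervalIntegral.abs_integral_le_integral_abs hcd.le
      _ ≤ ∫ y in c..d, (L₁ * (t * |x - m₁|) + L₂ * (s * |y - m₂|)) := by
          apply intervalIntegral.integral_mono_on hcd.le
            ((hIy x hx).sub intervalIntegrable_const).abs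
            (intervalIntegrable_const.add ((habsC.const_mul s).const_mul L₂))
          intro y hy
          exact hgC x hx y hy
      _ = (d - c) * (L₁ * (t * |x - m₁|)) + L₂ * s * ((d - c)^2 / 4) := by
          rw [intervalIntegral.integral_add intervalIntegrable_const
              ((habsC.const_mul s).const_mul L₂),
            intervalIntegral.integral_const, smul_eq_mul]
          have : (∫ y in c..d, L₂ * (s * |y - m₂|)) = L₂ * s * ∫ y in c..d, |y - m₂| := by
            rw [← intervalIntegral.integral_const_mul]
            congr 1; ext y; ring
          rw [this, hm₂, integral_abs_sub_mid c d hcd.le]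
  -- key bound on the outer integral
  have habsA : IntervalIntegrable (fun x => |x - m₁|) volume a b :=
    (continuous_abs.comp (continuous_id.sub continuous_const)).intervalIntegrable a b
  have hcontA : Continuous (fun x : ℝ => (d - c) * (L₁ * (t * |x - m₁|))) :=
    continuous_const.mul (continuous_const.mul (continuous_const.mul
      ((continuous_sub_right m₁).abs)))
  have hbdint : IntervalIntegrable
      (fun x => (d - c) * (L₁ * (t * |x - m₁|)) + L₂ * s * ((d - c)^2 / 4)) volume a b := by
    exact (hcontA.intervalIntegrable a b).add intervalIntegrable_const
  have hbdval : (∫ x in a..b, ((d - c) * (L₁ * (t * |x - m₁|)) + L₂ * s * ((d - c)^2 / 4)))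
      = (d - c) * (L₁ * t * ((b - a)^2 / 4)) + (b - a) * (L₂ * s * ((d - c)^2 / 4)) := by
    rw [intervalIntegral.integral_add (hcontA.intervalIntegrable a b)
      intervalIntegrable_const, intervalIntegral.integral_const, smul_eq_mul]
    have h1 : (∫ x in a..b, (d - c) * (L₁ * (t * |x - m₁|)))
        = ((d - c) * (L₁ * t)) * ∫ x in a..b, |x - m₁| := by
      rw [← intervalIntegral.integral_const_mul]
      congr 1; ext x; ring
    rw [h1, hm₁, integral_abs_sub_mid a b hab.le]
    ring
  have key : |∫ x in a..b, (Ψ x - (d - c) * C)|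
      ≤ (d - c) * (L₁ * t * ((b - a)^2 / 4)) + (b - a) * (L₂ * s * ((d - c)^2 / 4)) := by
    calc |∫ x in a..b, (Ψ x - (d - c) * C)| ≤ ∫ x in a..b, |Ψ x - (d - c) * C| :=
          intervalIntegral.abs_integral_le_integral_abs hab.le
      _ ≤ ∫ x in a..b, ((d - c) * (L₁ * (t * |x - m₁|)) + L₂ * s * ((d - c)^2 / 4)) := by
          apply intervalIntegral.integral_mono_on hab.le
            (hΨint.sub intervalIntegrable_const).abs hbdint
          exact hΨbd
      _ = _ := hbdval
  have hApos : (0:ℝ) < (b - a) * (d - c) := mul_pos (by linarith) (by linarith)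
  have hHval : H t s - C = (1 / ((b - a) * (d - c))) * ∫ x in a..b, (Ψ x - (d - c) * C) := by
    have hsplit : (∫ x in a..b, (Ψ x - (d - c) * C))
        = (∫ x in a..b, Ψ x) - (b - a) * ((d - c) * C) := by
      rw [intervalIntegral.integral_sub hΨint intervalIntegrable_const,
        intervalIntegral.integral_const, smul_eq_mul]
    have heq : (∫ x in a..b, ∫ y in c..d,
        f (t * x + (1 - t) * ((a + b) / 2)) (s * y + (1 - s) * ((c + d) / 2)))
        = ∫ x in a..b, Ψ x := rfl
    rw [hH t s, heq, hsplit]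
    have hba : b - a ≠ 0 := sub_ne_zero.mpr hab.ne'
    have hdc : d - c ≠ 0 := sub_ne_zero.mpr hcd.ne'
    field_simp
  rw [hHval, abs_mul, abs_of_pos (by positivity : (0:ℝ) < 1 / ((b - a) * (d - c)))]
  have : (1 / ((b - a) * (d - c))) * ((d - c) * (L₁ * t * ((b - a)^2 / 4))
      + (b - a) * (L₂ * s * ((d - c)^2 / 4)))
      = (L₁ * t / 4) * (b - a) + (L₂ * s / 4) * (d - c) := by
    have hba : b - a ≠ 0 := sub_ne_zero.mpr hab.ne'
    have hdc : d - c ≠ 0 := sub_ne_zero.mpr hcd.ne'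
    field_simp
  calc (1 / ((b - a) * (d - c))) * |∫ x in a..b, (Ψ x - (d - c) * C)|
      ≤ (1 / ((b - a) * (d - c))) * ((d - c) * (L₁ * t * ((b - a)^2 / 4))
        + (b - a) * (L₂ * s * ((d - c)^2 / 4))) := by
        apply mul_le_mul_of_nonneg_left key (by positivity)
    _ = (L₁ * t / 4) * (b - a) + (L₂ * s / 4) * (d - c) := this
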